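/- Let T > 0 and let v, u : ℝ × [0,T] → ℂ be measurable. Suppose p : ℝ → [0,∞) is measurable and |u(x,t)| ≤ p(x−t) for all (x,t) ∈ ℝ × [0,T]. Then ‖v u‖_{N₊(T)} ≤ √T ‖v‖_{X₋(T)} ‖p‖_{D(T)}, where v u denotes the pointwise product. Symmetrically, if q : ℝ → [0,∞) satisfies |v(x,t)| ≤ q(x+t) for all (x,t), then ‖u v‖_{N₋(T)} ≤ √T ‖u‖_{X₊(T)} ‖q‖_{D(T)}. -/

import Mathlib

open MeasureTheory Set

/-- The `D(T)` norm: `‖f‖_{D(T)} = sup_{x ∈ ℝ} (∫₀^T |f(x+2s)|² ds)^{1/2}`,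
for a nonnegative (extended-real-valued) density `g`. -/
noncomputable def DnormE (T : ℝ) (g : ℝ → ENNReal) : ENNReal :=
  ⨆ x : ℝ, (∫⁻ s in Set.Ioc (0:ℝ) T, (g (x + 2*s))^2) ^ (1/2 : ℝ)

/-- The `D(T)` norm of a complex-valued function. -/
noncomputable def Dnorm (T : ℝ) (f : ℝ → ℂ) : ENNReal :=
  DnormE T (fun y => (‖f y‖₊ : ENNReal))

/-- `‖u‖_{X₊(T)} = sup_{x ∈ ℝ} (∫₀^T |u(x−t,t)|² dt)^{1/2}`. -/
noncomputable def Xplus (T : ℝ) (u : ℝ → ℝ → ℂ) : ENNReal :=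
  ⨆ x : ℝ, (∫⁻ t in Set.Ioc (0:ℝ) T, (‖u (x - t) t‖₊ : ENNReal)^2) ^ (1/2 : ℝ)

/-- `‖v‖_{X₋(T)} = sup_{x ∈ ℝ} (∫₀^T |v(x+t,t)|² dt)^{1/2}`. -/
noncomputable def Xminus (T : ℝ) (v : ℝ → ℝ → ℂ) : ENNReal :=
  ⨆ x : ℝ, (∫⁻ t in Set.Ioc (0:ℝ) T, (‖v (x + t) t‖₊ : ENNReal)^2) ^ (1/2 : ℝ)

/-- `‖F‖_{N₊(T)}`: the `D(T)` norm of `y ↦ ∫₀^T |F(y+s,s)| ds`. -/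
noncomputable def Nplus (T : ℝ) (F : ℝ → ℝ → ℂ) : ENNReal :=
  DnormE T (fun y => ∫⁻ s in Set.Ioc (0:ℝ) T, (‖F (y + s) s‖₊ : ENNReal))

/-- `‖F‖_{N₋(T)}`: the `D(T)` norm of `y ↦ ∫₀^T |F(y−s,s)| ds`. -/
noncomputable def Nminus (T : ℝ) (F : ℝ → ℝ → ℂ) : ENNReal :=
  DnormE T (fun y => ∫⁻ s in Set.Ioc (0:ℝ) T, (‖F (y - s) s‖₊ : ENNReal))

/-- Cauchy–Schwarz on `(0,T]`. -/
lemma aux_CS (T : ℝ) (hT : 0 < T) (f : ℝ → ENNReal) (hf : Measurable f) :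
    ∫⁻ s in Set.Ioc (0:ℝ) T, f s
      ≤ ENNReal.ofReal (Real.sqrt T) * (∫⁻ s in Set.Ioc (0:ℝ) T, (f s)^2) ^ (1/2 : ℝ) := by
  have hpq : Real.HolderConjugate 2 2 := Real.HolderConjugate.two_two
  have h := ENNReal.lintegral_mul_le_Lp_mul_Lq (volume.restrict (Set.Ioc (0:ℝ) T)) hpq
      (aemeasurable_const (b := (1:ENNReal))) hf.aemeasurable
  simp only [Pi.mul_apply, one_mul, ENNReal.one_rpow] at h
  calc ∫⁻ s in Set.Ioc (0:ℝ) T, f s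
      ≤ (∫⁻ _ in Set.Ioc (0:ℝ) T, (1:ENNReal)) ^ (1/2:ℝ)
          * (∫⁻ s in Set.Ioc (0:ℝ) T, f s ^ (2:ℝ)) ^ (1/2:ℝ) := by
        simpa using h
    _ = ENNReal.ofReal (Real.sqrt T) * (∫⁻ s in Set.Ioc (0:ℝ) T, (f s)^2) ^ (1/2 : ℝ) := by
        congr 1
        · rw [lintegral_const, one_mul, Measure.restrict_apply MeasurableSet.univ, univ_inter,
            Real.volume_Ioc, sub_zero, ENNReal.ofReal_rpow_of_pos hT, Real.sqrt_eq_rpow]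
        · congr 1
          refine lintegral_congr fun s => ?_
          rw [show (2:ℝ) = ((2:ℕ):ℝ) by norm_num, ENNReal.rpow_natCast]

lemma sq_rpow_half (c : ENNReal) : (c^2) ^ (1/2:ℝ) = c := by
  rw [← ENNReal.rpow_natCast c 2, ← ENNReal.rpow_mul]
  norm_num

lemma DnormE_le_mul (T : ℝ) (c : ENNReal) (p g : ℝ → ENNReal) (hp : Measurable p)
    (hg : ∀ y, g y ≤ c * p y) : DnormE T g ≤ c * DnormE T p := by
  refine iSup_le fun x => ?_
  have hmeas : Measurable fun s : ℝ => p (x + 2*s) ^ 2 :=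
    (hp.comp ((measurable_const_mul 2).const_add x)).pow_const 2
  calc (∫⁻ s in Set.Ioc (0:ℝ) T, g (x + 2*s) ^ 2) ^ (1/2:ℝ)
      ≤ (∫⁻ s in Set.Ioc (0:ℝ) T, (c * p (x + 2*s)) ^ 2) ^ (1/2:ℝ) := by
        gcongr with s
        exact hg _
    _ = (c^2 * ∫⁻ s in Set.Ioc (0:ℝ) T, p (x + 2*s) ^ 2) ^ (1/2:ℝ) := by
        rw [← lintegral_const_mul _ hmeas]
        simp_rw [mul_pow]
    _ = c * (∫⁻ s in Set.Ioc (0:ℝ) T, p (x + 2*s) ^ 2) ^ (1/2:ℝ) := by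
        rw [ENNReal.mul_rpow_of_nonneg _ _ (by norm_num), sq_rpow_half]
    _ ≤ c * DnormE T p := by
        gcongr
        exact le_iSup (fun x => (∫⁻ s in Set.Ioc (0:ℝ) T, p (x + 2*s) ^ 2) ^ (1/2:ℝ)) x

/-- Mixed bilinear estimates: if `|u(x,t)| ≤ p(x−t)` then
`‖v u‖_{N₊(T)} ≤ √T ‖v‖_{X₋(T)} ‖p‖_{D(T)}`, and symmetrically, if `|v(x,t)| ≤ q(x+t)` then
`‖u v‖_{N₋(T)} ≤ √T ‖u‖_{X₊(T)} ‖q‖_{D(T)}`. -/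
theorem mixed_bilinear_estimates (T : ℝ) (hT : 0 < T) (u v : ℝ → ℝ → ℂ)
    (hu : Measurable (Function.uncurry u)) (hv : Measurable (Function.uncurry v))
    (p q : ℝ → ENNReal) (hp : Measurable p) (hq : Measurable q)
    (hup : ∀ x : ℝ, ∀ t ∈ Set.Icc (0:ℝ) T, (‖u x t‖₊ : ENNReal) ≤ p (x - t))
    (hvq : ∀ x : ℝ, ∀ t ∈ Set.Icc (0:ℝ) T, (‖v x t‖₊ : ENNReal) ≤ q (x + t)) :
    Nplus T (fun x t => v x t * u x t)
        ≤ ENNReal.ofReal (Real.sqrt T) * Xminus T v * DnormE T p ∧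
    Nminus T (fun x t => u x t * v x t)
        ≤ ENNReal.ofReal (Real.sqrt T) * Xplus T u * DnormE T q := by
  constructor
  · refine le_trans (DnormE_le_mul T (ENNReal.ofReal (Real.sqrt T) * Xminus T v) p _ hp
      fun y => ?_) (by rw [mul_assoc])
    have hvm : Measurable fun s : ℝ => (‖v (y + s) s‖₊ : ENNReal) :=
      (hv.comp ((measurable_id.const_add y).prodMk measurable_id)).nnnorm.coe_nnreal_ennreal
    calc (∫⁻ s in Set.Ioc (0:ℝ) T, (‖v (y + s) s * u (y + s) s‖₊ : ENNReal))
        ≤ ∫⁻ s in Set.Ioc (0:ℝ) T, (‖v (y + s) s‖₊ : ENNReal) * p y := by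
          refine setLIntegral_mono' measurableSet_Ioc fun s hs => ?_
          rw [nnnorm_mul, ENNReal.coe_mul]
          refine mul_le_mul_right ?_ _
          have := hup (y + s) s ⟨hs.1.le, hs.2⟩
          simpa using this
      _ = (∫⁻ s in Set.Ioc (0:ℝ) T, (‖v (y + s) s‖₊ : ENNReal)) * p y :=
          lintegral_mul_const'' _ hvm.aemeasurable
      _ ≤ (ENNReal.ofReal (Real.sqrt T)
            * (∫⁻ s in Set.Ioc (0:ℝ) T, (‖v (y + s) s‖₊ : ENNReal)^2) ^ (1/2:ℝ)) * p y := by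
          gcongr
          exact aux_CS T hT _ hvm
      _ ≤ ENNReal.ofReal (Real.sqrt T) * Xminus T v * p y := by
          gcongr
          exact le_iSup (fun x => (∫⁻ t in Set.Ioc (0:ℝ) T,
            (‖v (x + t) t‖₊ : ENNReal)^2) ^ (1/2:ℝ)) y
  · refine le_trans (DnormE_le_mul T (ENNReal.ofReal (Real.sqrt T) * Xplus T u) q _ hq
      fun y => ?_) (by rw [mul_assoc])
    have hum : Measurable fun s : ℝ => (‖u (y - s) s‖₊ : ENNReal) :=
      (hu.comp ((measurable_id.const_sub y).prodMk measurable_id)).nnnorm.coe_nnreal_ennreal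
    calc (∫⁻ s in Set.Ioc (0:ℝ) T, (‖u (y - s) s * v (y - s) s‖₊ : ENNReal))
        ≤ ∫⁻ s in Set.Ioc (0:ℝ) T, (‖u (y - s) s‖₊ : ENNReal) * q y := by
          refine setLIntegral_mono' measurableSet_Ioc fun s hs => ?_
          rw [nnnorm_mul, ENNReal.coe_mul]
          refine mul_le_mul_right ?_ _
          have := hvq (y - s) s ⟨hs.1.le, hs.2⟩
          simpa using this
      _ = (∫⁻ s in Set.Ioc (0:ℝ) T, (‖u (y - s) s‖₊ : ENNReal)) * q y :=
          lintegral_mul_const'' _ hum.aemeasurable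
      _ ≤ (ENNReal.ofReal (Real.sqrt T)
            * (∫⁻ s in Set.Ioc (0:ℝ) T, (‖u (y - s) s‖₊ : ENNReal)^2) ^ (1/2:ℝ)) * q y := by
          gcongr
          exact aux_CS T hT _ hum
      _ ≤ ENNReal.ofReal (Real.sqrt T) * Xplus T u * q y := by
          gcongr
          exact le_iSup (fun x => (∫⁻ t in Set.Ioc (0:ℝ) T,
            (‖u (x - t) t‖₊ : ENNReal)^2) ^ (1/2:ℝ)) y
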